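/- Let N ≥ 1, let Ω ⊆ ℝ³ be open and T > 0, let ρ = (ρ_1,…,ρ_N) : Ω × (0,T) → (0,∞)^N and v : Ω × (0,T) → ℝ³ be differentiable, and let Λ : (0,∞)^N → ℝ be continuously differentiable and positively homogeneous of degree one. If each component satisfies the mass continuity equation ∂_t ρ_i + div(ρ_i v) = 0 pointwise on Ω × (0,T), then w := Λ ∘ ρ satisfies the conservation law ∂_t w + div(w v) = 0 pointwise on Ω × (0,T). -/

import Mathlib

/-- Partial derivative in time of a function of `(x,t) ∈ ℝ³ × ℝ`. -/
noncomputable def ptime (f : ((Fin 3 → ℝ) × ℝ) → ℝ) (z : (Fin 3 → ℝ) × ℝ) : ℝ :=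
  fderiv ℝ f z (0, 1)

/-- `k`-th spatial partial derivative of a function of `(x,t) ∈ ℝ³ × ℝ`. -/
noncomputable def pspace (k : Fin 3) (f : ((Fin 3 → ℝ) × ℝ) → ℝ) (z : (Fin 3 → ℝ) × ℝ) : ℝ :=
  fderiv ℝ f z (Pi.single k 1, 0)

/-- Spatial divergence of a vector field of `(x,t) ∈ ℝ³ × ℝ`. -/
noncomputable def spaceDiv (F : ((Fin 3 → ℝ) × ℝ) → Fin 3 → ℝ) (z : (Fin 3 → ℝ) × ℝ) : ℝ :=
  ∑ k, pspace k (fun p => F p k) z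

/-- If each `ρ_i` satisfies the mass continuity equation `∂_t ρ_i + div(ρ_i v) = 0` on
`Ω × (0,T)`, and `Λ` is C¹ and positively 1-homogeneous on the positive orthant, then
`w = Λ ∘ ρ` satisfies the conservation law `∂_t w + div(w v) = 0`. -/
theorem volume_extension_conservation
    (N : ℕ) (hN : 1 ≤ N)
    (Ω : Set (Fin 3 → ℝ)) (hΩ : IsOpen Ω) (T : ℝ) (hT : 0 < T)
    (S : Set (Fin N → ℝ)) (hS : S = {y | ∀ i, 0 < y i})
    (ρ : ((Fin 3 → ℝ) × ℝ) → Fin N → ℝ)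
    (v : ((Fin 3 → ℝ) × ℝ) → Fin 3 → ℝ)
    (hρdiff : ∀ z : (Fin 3 → ℝ) × ℝ, z.1 ∈ Ω → z.2 ∈ Set.Ioo 0 T → DifferentiableAt ℝ ρ z)
    (hvdiff : ∀ z : (Fin 3 → ℝ) × ℝ, z.1 ∈ Ω → z.2 ∈ Set.Ioo 0 T → DifferentiableAt ℝ v z)
    (hρS : ∀ z : (Fin 3 → ℝ) × ℝ, z.1 ∈ Ω → z.2 ∈ Set.Ioo 0 T → ρ z ∈ S)
    (Λ : (Fin N → ℝ) → ℝ)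
    (hΛ : ContDiffOn ℝ 1 Λ S)
    (hhom : ∀ t : ℝ, 0 < t → ∀ y ∈ S, Λ (t • y) = t * Λ y)
    (hpde : ∀ (i : Fin N) (z : (Fin 3 → ℝ) × ℝ), z.1 ∈ Ω → z.2 ∈ Set.Ioo 0 T →
      ptime (fun p => ρ p i) z + spaceDiv (fun p k => ρ p i * v p k) z = 0) :
    ∀ z : (Fin 3 → ℝ) × ℝ, z.1 ∈ Ω → z.2 ∈ Set.Ioo 0 T →
      ptime (fun p => Λ (ρ p)) z + spaceDiv (fun p k => Λ (ρ p) * v p k) z = 0 := by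
  have hSopen : IsOpen S := by
    rw [hS]
    have : {y : Fin N → ℝ | ∀ i, 0 < y i} =
        ⋂ i, (fun y : Fin N → ℝ => y i) ⁻¹' Set.Ioi 0 := by
      ext y; simp [Set.mem_iInter]
    rw [this]
    exact isOpen_iInter_of_finite fun i =>
      (isOpen_Ioi).preimage (continuous_apply i)
  -- Euler's identity
  have euler : ∀ y ∈ S, fderiv ℝ Λ y y = Λ y := by
    intro y hy
    have hΛy : DifferentiableAt ℝ Λ y :=
      (hΛ.contDiffAt (hSopen.mem_nhds hy)).differentiableAt one_ne_zero
    have hsmul : HasDerivAt (fun t : ℝ => t • y) y 1 := by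
      simpa using (hasDerivAt_id (1 : ℝ)).smul_const y
    have h1 : HasDerivAt (fun t : ℝ => Λ (t • y)) (fderiv ℝ Λ y y) 1 := by
      have h0 : HasFDerivAt Λ (fderiv ℝ Λ y) ((1:ℝ) • y) := by
        rw [one_smul]; exact hΛy.hasFDerivAt
      have := h0.comp_hasDerivAt 1 hsmul
      exact this
    have h2 : (fun t : ℝ => Λ (t • y)) =ᶠ[nhds (1 : ℝ)] (fun t => t * Λ y) := by
      filter_upwards [Ioi_mem_nhds (by norm_num : (0 : ℝ) < 1)] with t ht
      exact hhom t ht y hy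
    have h3 : HasDerivAt (fun t : ℝ => t * Λ y) (fderiv ℝ Λ y y) 1 :=
      h1.congr_of_eventuallyEq h2.symm
    have h4 : HasDerivAt (fun t : ℝ => t * Λ y) (Λ y) 1 := by
      simpa using (hasDerivAt_id (1 : ℝ)).mul_const (Λ y)
    exact (h4.unique h3).symm
  intro z hzΩ hzT
  have hρz : ρ z ∈ S := hρS z hzΩ hzT
  have hρd := hρdiff z hzΩ hzT
  have hvd := hvdiff z hzΩ hzT
  have hΛdiff : DifferentiableAt ℝ Λ (ρ z) :=
    (hΛ.contDiffAt (hSopen.mem_nhds hρz)).differentiableAt one_ne_zero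
  set R := fderiv ℝ ρ z with hRdef
  set L := fderiv ℝ Λ (ρ z) with hLdef
  set Vd := fderiv ℝ v z with hVdef
  have hρi : ∀ i : Fin N, HasFDerivAt (fun p => ρ p i)
      ((ContinuousLinearMap.proj i : (Fin N → ℝ) →L[ℝ] ℝ).comp R) z :=
    fun i => (ContinuousLinearMap.proj i :
      (Fin N → ℝ) →L[ℝ] ℝ).hasFDerivAt.comp z hρd.hasFDerivAt
  have hvk : ∀ k : Fin 3, HasFDerivAt (fun p => v p k)
      ((ContinuousLinearMap.proj k : (Fin 3 → ℝ) →L[ℝ] ℝ).comp Vd) z :=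
    fun k => (ContinuousLinearMap.proj k :
      (Fin 3 → ℝ) →L[ℝ] ℝ).hasFDerivAt.comp z hvd.hasFDerivAt
  have hw : HasFDerivAt (fun p => Λ (ρ p)) (L.comp R) z :=
    hΛdiff.hasFDerivAt.comp z hρd.hasFDerivAt
  -- divergence of v
  set D := ∑ k, Vd (Pi.single k 1, 0) k with hDdef
  -- product rules
  have hmulw : ∀ k : Fin 3, fderiv ℝ (fun p => Λ (ρ p) * v p k) z =
      Λ (ρ z) • ((ContinuousLinearMap.proj k : (Fin 3 → ℝ) →L[ℝ] ℝ).comp Vd)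
        + v z k • (L.comp R) :=
    fun k => (hw.mul (hvk k)).fderiv
  have hmulρ : ∀ (i : Fin N) (k : Fin 3), fderiv ℝ (fun p => ρ p i * v p k) z =
      ρ z i • ((ContinuousLinearMap.proj k : (Fin 3 → ℝ) →L[ℝ] ℝ).comp Vd)
        + v z k • ((ContinuousLinearMap.proj i : (Fin N → ℝ) →L[ℝ] ℝ).comp R) :=
    fun i k => ((hρi i).mul (hvk k)).fderiv
  -- rewrite the PDE
  have hpde' : ∀ i : Fin N,
      R (0, 1) i + ∑ k, v z k * R (Pi.single k 1, 0) i = -(ρ z i * D) := by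
    intro i
    have h := hpde i z hzΩ hzT
    simp only [ptime, spaceDiv, pspace, (hρi i).fderiv, hmulρ i,
      ContinuousLinearMap.add_apply, ContinuousLinearMap.smul_apply,
      ContinuousLinearMap.comp_apply, ContinuousLinearMap.proj_apply,
      smul_eq_mul, Finset.sum_add_distrib, ← Finset.mul_sum, ← hDdef] at h
    linarith [h]
  -- the key vector
  have hvec : (R (0, 1) + ∑ k, v z k • R (Pi.single k 1, 0)) = (-D) • ρ z := by
    funext i
    have := hpde' i
    simp only [Pi.add_apply, Finset.sum_apply, Pi.smul_apply, smul_eq_mul]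
    rw [this]; ring
  have hLvec : L (R (0, 1)) + ∑ k, v z k * L (R (Pi.single k 1, 0)) = -(D * Λ (ρ z)) := by
    have := congrArg L hvec
    rw [map_add, map_sum, map_smul] at this
    simp only [map_smul, smul_eq_mul] at this
    rw [this]
    rw [euler (ρ z) hρz]
    ring
  simp only [ptime, spaceDiv, pspace, hw.fderiv, hmulw,
    ContinuousLinearMap.add_apply, ContinuousLinearMap.smul_apply,
    ContinuousLinearMap.comp_apply, ContinuousLinearMap.proj_apply,
    smul_eq_mul, Finset.sum_add_distrib, ← Finset.mul_sum, ← hDdef]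
  rw [show (∑ k, v z k * L (R (Pi.single k 1, 0))) =
    (∑ k : Fin 3, v z k * L (R (Pi.single k 1, 0))) from rfl] at hLvec
  linarith [hLvec]
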